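/- arXiv:2209.11213 — 2 statements merged into one kernel-verified Lean document; each statement's English description precedes it below -/
import Mathlib

section
/- Let K ≥ 1 be an integer, 0 ≤ ε < 1, μ > 0, and τ ≥ 0. Then Σ_{ρ=K}^∞ C(ρ−1, K−1) ε^{ρ−K}(1−ε)^K [τ γ(μτ, ρ) − (ρ/μ) γ(μτ, ρ+1)] = ∫_0^∞ max(τ − y, 0) · ((1−ε)μ)^K y^{K−1} e^{−(1−ε)μ y}/(K−1)! dy, where γ(x, ρ) = (1/(ρ−1)!) ∫_0^x t^{ρ−1} e^{−t} dt is the normalized lower incomplete Gamma function and C(·,·) is the binomial coefficient. -/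
open Real MeasureTheory

/-- The normalized lower incomplete Gamma function
`γ(x, ρ) = (1/(ρ-1)!) ∫_0^x t^{ρ-1} e^{-t} dt`. -/
noncomputable def normIncGamma (x : ℝ) (ρ : ℕ) : ℝ :=
  (1 / (Nat.factorial (ρ - 1) : ℝ)) * ∫ t in (0 : ℝ)..x, t ^ (ρ - 1) * Real.exp (-t)

lemma int_pow_exp (m : ℕ) {μ : ℝ} (hμ : 0 < μ) (τ : ℝ) :
    ∫ y in (0:ℝ)..τ, y ^ m * Real.exp (-(μ * y))
      = (1 / μ ^ (m + 1)) * ∫ t in (0:ℝ)..(μ * τ), t ^ m * Real.exp (-t) := by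
  have h := intervalIntegral.integral_comp_mul_left (a := 0) (b := τ)
      (f := fun t => t ^ m * Real.exp (-t)) (c := μ) hμ.ne'
  simp only [mul_pow, mul_zero] at h
  rw [show (fun x : ℝ => μ ^ m * x ^ m * Real.exp (-(μ * x)))
      = (fun x : ℝ => μ ^ m * (x ^ m * Real.exp (-(μ * x)))) from funext fun x => by ring,
    intervalIntegral.integral_const_mul, smul_eq_mul] at h
  have hμm : (μ : ℝ) ^ m ≠ 0 := pow_ne_zero _ hμ.ne'
  field_simp at h ⊢
  linear_combination h

lemma cont_pow_exp (m : ℕ) (μ : ℝ) :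
    Continuous (fun y : ℝ => y ^ m * Real.exp (-(μ * y))) := by
  fun_prop

lemma per_term {μ : ℝ} (hμ : 0 < μ) {τ : ℝ} (hτ : 0 ≤ τ) (ρ : ℕ) (hρ : 1 ≤ ρ) :
    (∫ y in Set.Ioi (0:ℝ), max (τ - y) 0 *
        (μ ^ ρ * y ^ (ρ - 1) * Real.exp (-(μ * y)) / (Nat.factorial (ρ - 1))))
      = τ * normIncGamma (μ * τ) ρ - (ρ : ℝ) / μ * normIncGamma (μ * τ) (ρ + 1) := by
  obtain ⟨m, rfl⟩ : ∃ m, ρ = m + 1 := ⟨ρ - 1, by omega⟩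
  simp only [Nat.add_sub_cancel, normIncGamma]
  have hstep1 : (∫ y in Set.Ioi (0:ℝ), max (τ - y) 0 *
        (μ ^ (m+1) * y ^ m * Real.exp (-(μ * y)) / (Nat.factorial m)))
      = ∫ y in Set.Ioc (0:ℝ) τ, max (τ - y) 0 *
        (μ ^ (m+1) * y ^ m * Real.exp (-(μ * y)) / (Nat.factorial m)) := by
    apply setIntegral_eq_of_subset_of_forall_diff_eq_zero measurableSet_Ioi
      Set.Ioc_subset_Ioi_self
    intro x hx
    have : τ < x := by
      rcases hx with ⟨h1, h2⟩
      simp only [Set.mem_Ioi] at h1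
      simp only [Set.mem_Ioc, not_and, not_le] at h2
      exact h2 h1
    rw [max_eq_right (by linarith)]
    ring
  rw [hstep1, ← intervalIntegral.integral_of_le hτ]
  have hstep2 : (∫ y in (0:ℝ)..τ, max (τ - y) 0 *
        (μ ^ (m+1) * y ^ m * Real.exp (-(μ * y)) / (Nat.factorial m)))
      = ∫ y in (0:ℝ)..τ, (τ * μ ^ (m+1) / (Nat.factorial m)) * (y ^ m * Real.exp (-(μ * y)))
          - (μ ^ (m+1) / (Nat.factorial m)) * (y ^ (m+1) * Real.exp (-(μ * y))) := by
    apply intervalIntegral.integral_congr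
    intro y hy
    have h2 : y ≤ τ := le_trans hy.2 (le_of_eq (max_eq_right hτ))
    dsimp only
    rw [max_eq_left (by linarith : (0:ℝ) ≤ τ - y)]
    ring
  rw [hstep2, intervalIntegral.integral_sub
      (f := fun y : ℝ => τ * μ ^ (m+1) / (Nat.factorial m : ℝ) * (y ^ m * Real.exp (-(μ * y))))
      (g := fun y : ℝ => μ ^ (m+1) / (Nat.factorial m : ℝ) * (y ^ (m+1) * Real.exp (-(μ * y))))
      ((continuous_const.mul (cont_pow_exp m μ)).intervalIntegrable _ _)
      ((continuous_const.mul (cont_pow_exp (m+1) μ)).intervalIntegrable _ _),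
    intervalIntegral.integral_const_mul, intervalIntegral.integral_const_mul,
    int_pow_exp m hμ, int_pow_exp (m+1) hμ]
  have h1 : (Nat.factorial m : ℝ) ≠ 0 := Nat.cast_ne_zero.2 (Nat.factorial_ne_zero m)
  have h2 : (Nat.factorial (m+1) : ℝ) = (m+1) * Nat.factorial m := by
    rw [Nat.factorial_succ]; push_cast; ring
  rw [h2]
  field_simp
  push_cast
  ring

lemma pointwise_sum (K : ℕ) (hK : 1 ≤ K) (ε μ τ : ℝ) (y : ℝ) :
    ∑' n : ℕ, (Nat.choose (n + K - 1) (K - 1) : ℝ) * ε ^ n * (1 - ε) ^ K *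
        (max (τ - y) 0 * (μ ^ (n + K) * y ^ (n + K - 1) * Real.exp (-(μ * y))
          / (Nat.factorial (n + K - 1))))
      = max (τ - y) 0 * (((1 - ε) * μ) ^ K * y ^ (K - 1) * Real.exp (-(1 - ε) * μ * y)
          / (Nat.factorial (K - 1))) := by
  have hterm : ∀ n : ℕ,
      (Nat.choose (n + K - 1) (K - 1) : ℝ) * ε ^ n * (1 - ε) ^ K *
        (max (τ - y) 0 * (μ ^ (n + K) * y ^ (n + K - 1) * Real.exp (-(μ * y))
          / (Nat.factorial (n + K - 1))))
      = (max (τ - y) 0 * ((1 - ε) ^ K * μ ^ K * y ^ (K - 1) * Real.exp (-(μ * y))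
          / (Nat.factorial (K - 1)))) * ((ε * μ * y) ^ n / (Nat.factorial n)) := by
    intro n
    have hfac : (Nat.choose (n + K - 1) (K - 1) : ℝ) * (Nat.factorial n) *
        (Nat.factorial (K - 1)) = (Nat.factorial (n + K - 1)) := by
      rw [show n + K - 1 = n + (K - 1) by omega]
      exact_mod_cast congrArg (Nat.cast (R := ℝ))
        (Nat.add_choose_mul_factorial_mul_factorial n (K - 1))
    have hne1 : (Nat.factorial (n + K - 1) : ℝ) ≠ 0 :=
      Nat.cast_ne_zero.2 (Nat.factorial_ne_zero _)
    have hne2 : (Nat.factorial n : ℝ) ≠ 0 := Nat.cast_ne_zero.2 (Nat.factorial_ne_zero _)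
    have hne3 : (Nat.factorial (K - 1) : ℝ) ≠ 0 := Nat.cast_ne_zero.2 (Nat.factorial_ne_zero _)
    have hpowμ : μ ^ (n + K) = μ ^ n * μ ^ K := pow_add μ n K
    have hpowy : y ^ (n + K - 1) = y ^ n * y ^ (K - 1) := by
      rw [show n + K - 1 = n + (K - 1) by omega]; exact pow_add y n (K - 1)
    rw [hpowμ, hpowy, mul_pow, mul_pow]
    field_simp
    linear_combination (ε ^ n * μ ^ n * y ^ n * max (τ - y) 0 * μ ^ K * y ^ (K - 1) *
      (1 - ε) ^ K) * hfac
  rw [tsum_congr hterm, tsum_mul_left]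
  have hexpser : ∑' n : ℕ, (ε * μ * y) ^ n / (Nat.factorial n) = Real.exp (ε * μ * y) := by
    rw [Real.exp_eq_exp_ℝ, NormedSpace.exp_eq_tsum_div]
  rw [hexpser]
  have hexp : Real.exp (-(μ * y)) * Real.exp (ε * μ * y) = Real.exp (-(1 - ε) * μ * y) := by
    rw [← Real.exp_add]; ring_nf
  calc max (τ - y) 0 * ((1 - ε) ^ K * μ ^ K * y ^ (K - 1) * Real.exp (-(μ * y))
          / (Nat.factorial (K - 1))) * Real.exp (ε * μ * y)
      = max (τ - y) 0 * ((1 - ε) ^ K * μ ^ K * y ^ (K - 1) *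
          (Real.exp (-(μ * y)) * Real.exp (ε * μ * y)) / (Nat.factorial (K - 1))) := by ring
    _ = _ := by rw [hexp, mul_pow]

/-- The function `H(τ)` of the paper (eq. (30)) equals the expected waiting time
`E[(τ - Ỹ)^+]` where `Ỹ` has the Gamma(K, (1-ε)μ) density (sum reindexed by `ρ = n + K`). -/
theorem H_eq_expected_waiting (K : ℕ) (hK : 1 ≤ K) (ε μ τ : ℝ)
    (hε0 : 0 ≤ ε) (hε1 : ε < 1) (hμ : 0 < μ) (hτ : 0 ≤ τ) :
    ∑' n : ℕ, (Nat.choose (n + K - 1) (K - 1) : ℝ) * ε ^ n * (1 - ε) ^ K *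
        (τ * normIncGamma (μ * τ) (n + K)
          - ((n + K : ℕ) : ℝ) / μ * normIncGamma (μ * τ) (n + K + 1))
      = ∫ y in Set.Ioi (0 : ℝ),
          max (τ - y) 0 * (((1 - ε) * μ) ^ K * y ^ (K - 1) * Real.exp (-(1 - ε) * μ * y)
            / (Nat.factorial (K - 1))) := by
  set G : ℕ → ℝ → ℝ := fun n y =>
    (Nat.choose (n + K - 1) (K - 1) : ℝ) * ε ^ n * (1 - ε) ^ K *
      (max (τ - y) 0 * (μ ^ (n + K) * y ^ (n + K - 1) * Real.exp (-(μ * y))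
        / (Nat.factorial (n + K - 1)))) with hG
  have h1ε : (0:ℝ) ≤ 1 - ε := by linarith
  have hcont : ∀ n, Continuous (G n) := by
    intro n; rw [hG]; fun_prop
  have hzero : ∀ n : ℕ, ∀ y ∈ Set.Ioi τ, G n y = 0 := by
    intro n y hy
    simp only [Set.mem_Ioi] at hy
    have hm : max (τ - y) 0 = 0 := max_eq_right (by linarith)
    simp [hG, hm]
  have hint : ∀ n, IntegrableOn (G n) (Set.Ioi 0) := by
    intro n
    rw [← Set.Ioc_union_Ioi_eq_Ioi hτ]
    refine ((hcont n).integrableOn_Ioc).union ?_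
    exact (integrableOn_congr_fun (hzero n) measurableSet_Ioi).2 integrableOn_zero
  -- the bounding sequence
  set M : ℕ → ℝ := fun n =>
    (Nat.choose (n + K - 1) (K - 1) : ℝ) * ε ^ n * (1 - ε) ^ K *
      (τ * (μ ^ (n + K) * τ ^ (n + K - 1) * 1 / (Nat.factorial (n + K - 1)))) with hM
  have hGle : ∀ n : ℕ, ∀ y ∈ Set.Ioc (0:ℝ) τ, ‖G n y‖ ≤ M n := by
    intro n y hy
    obtain ⟨hy0, hyτ⟩ := hy
    have hy0' : (0:ℝ) ≤ y := hy0.le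
    have hεn : (0:ℝ) ≤ ε ^ n := pow_nonneg hε0 n
    have h1εK : (0:ℝ) ≤ (1 - ε) ^ K := pow_nonneg h1ε K
    have hGnn : 0 ≤ G n y := by
      rw [hG]
      refine mul_nonneg (mul_nonneg (mul_nonneg (Nat.cast_nonneg _) hεn) h1εK)
        (mul_nonneg (le_max_right _ _)
          (div_nonneg (mul_nonneg (mul_nonneg (pow_nonneg hμ.le _) (pow_nonneg hy0' _))
            (Real.exp_nonneg _)) (Nat.cast_nonneg _)))
    rw [Real.norm_of_nonneg hGnn, hG, hM]
    dsimp only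
    have hc0 : (0:ℝ) ≤ (Nat.choose (n + K - 1) (K - 1) : ℝ) * ε ^ n * (1 - ε) ^ K :=
      mul_nonneg (mul_nonneg (Nat.cast_nonneg _) hεn) h1εK
    refine mul_le_mul_of_nonneg_left ?_ hc0
    refine mul_le_mul (max_le (by linarith) hτ) ?_
        (div_nonneg (mul_nonneg (mul_nonneg (pow_nonneg hμ.le _) (pow_nonneg hy0' _))
            (Real.exp_nonneg _)) (Nat.cast_nonneg _)) hτ
    have hfpos : (0:ℝ) < (Nat.factorial (n + K - 1) : ℝ) :=
      Nat.cast_pos.2 (Nat.factorial_pos _)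
    rw [div_le_div_iff₀ hfpos hfpos]
    have e1 : Real.exp (-(μ * y)) ≤ 1 :=
      Real.exp_le_one_iff.2 (by nlinarith [mul_nonneg hμ.le hy0'])
    have e2 : y ^ (n + K - 1) ≤ τ ^ (n + K - 1) := pow_le_pow_left₀ hy0' hyτ _
    have hnum : μ ^ (n + K) * y ^ (n + K - 1) * Real.exp (-(μ * y))
        ≤ μ ^ (n + K) * τ ^ (n + K - 1) * 1 :=
      mul_le_mul (mul_le_mul_of_nonneg_left e2 (pow_nonneg hμ.le _)) e1
        (Real.exp_pos _).le
        (mul_nonneg (pow_nonneg hμ.le _) (pow_nonneg (le_trans hy0' hyτ) _))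
    nlinarith [hfpos, hnum]
  have hbound : ∀ n, (∫ y in Set.Ioi (0:ℝ), ‖G n y‖) ≤ τ * M n := by
    intro n
    have heq : (∫ y in Set.Ioi (0:ℝ), ‖G n y‖) = ∫ y in Set.Ioc (0:ℝ) τ, ‖G n y‖ := by
      apply setIntegral_eq_of_subset_of_forall_diff_eq_zero measurableSet_Ioi
        Set.Ioc_subset_Ioi_self
      intro x hx
      have hxτ : τ < x := by
        rcases hx with ⟨h1, h2⟩
        simp only [Set.mem_Ioi] at h1
        simp only [Set.mem_Ioc, not_and, not_le] at h2
        exact h2 h1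
      rw [hzero n x (Set.mem_Ioi.2 hxτ), norm_zero]
    rw [heq]
    calc (∫ y in Set.Ioc (0:ℝ) τ, ‖G n y‖) ≤ ∫ _y in Set.Ioc (0:ℝ) τ, M n :=
        setIntegral_mono_on ((hcont n).integrableOn_Ioc).norm
          (integrableOn_const measure_Ioc_lt_top.ne) measurableSet_Ioc (hGle n)
      _ = τ * M n := by
        rw [setIntegral_const, smul_eq_mul, Real.volume_real_Ioc_of_le hτ,
          sub_zero]
  have hMeq : ∀ n : ℕ, τ * M n
      = (τ ^ 2 * (1 - ε) ^ K * μ ^ K * τ ^ (K - 1) / (Nat.factorial (K - 1)))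
        * ((ε * μ * τ) ^ n / (Nat.factorial n)) := by
    intro n
    rw [hM]
    dsimp only
    have hfac : (Nat.choose (n + K - 1) (K - 1) : ℝ) * (Nat.factorial n) *
        (Nat.factorial (K - 1)) = (Nat.factorial (n + K - 1)) := by
      rw [show n + K - 1 = n + (K - 1) by omega]
      exact_mod_cast congrArg (Nat.cast (R := ℝ))
        (Nat.add_choose_mul_factorial_mul_factorial n (K - 1))
    have hch : ((Nat.choose (n + (K - 1)) (K - 1) : ℝ)) ≠ 0 :=
      ne_of_gt (by exact_mod_cast Nat.choose_pos (Nat.le_add_left _ _))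
    have hne2 : (Nat.factorial n : ℝ) ≠ 0 := Nat.cast_ne_zero.2 (Nat.factorial_ne_zero _)
    have hne3 : (Nat.factorial (K - 1) : ℝ) ≠ 0 := Nat.cast_ne_zero.2 (Nat.factorial_ne_zero _)
    rw [← hfac, pow_add μ n K, show n + K - 1 = n + (K - 1) by omega,
      pow_add τ n (K - 1), mul_pow, mul_pow]
    field_simp [hch]
  have hsumM : Summable (fun n => τ * M n) :=
    ((Real.summable_pow_div_factorial (ε * μ * τ)).mul_left _).congr
      (fun n => (hMeq n).symm)
  have hsummable : Summable (fun n => ∫ y in Set.Ioi (0:ℝ), ‖G n y‖) :=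
    Summable.of_nonneg_of_le (fun n => integral_nonneg (fun y => norm_nonneg _))
      hbound hsumM
  have hswap := MeasureTheory.integral_tsum_of_summable_integral_norm
    (μ := volume.restrict (Set.Ioi 0)) (F := G) hint hsummable
  calc ∑' n : ℕ, (Nat.choose (n + K - 1) (K - 1) : ℝ) * ε ^ n * (1 - ε) ^ K *
        (τ * normIncGamma (μ * τ) (n + K)
          - ((n + K : ℕ) : ℝ) / μ * normIncGamma (μ * τ) (n + K + 1))
      = ∑' n : ℕ, ∫ y in Set.Ioi (0:ℝ), G n y := by
        refine tsum_congr fun n => ?_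
        simp only [hG]
        rw [integral_const_mul, per_term hμ hτ (n + K) (by omega)]
    _ = ∫ y in Set.Ioi (0:ℝ), ∑' n, G n y := hswap
    _ = _ := by
        apply integral_congr_ae
        filter_upwards with y
        simp only [hG]
        exact pointwise_sum K hK ε μ τ y
end

section
/- Let K ≥ 1 be an integer, 0 ≤ ε < 1, θ > 0, μ > 0, and τ ≥ 0. Then Σ_{ρ=K}^∞ C(ρ−1, K−1) ε^{ρ−K}(1−ε)^K [e^{−2θτ} γ(μτ, ρ) + (μ/(2θ+μ))^ρ (1 − γ((2θ+μ)τ, ρ))] = ∫_0^∞ e^{−2θ · max(τ, y)} · ((1−ε)μ)^K y^{K−1} e^{−(1−ε)μ y}/(K−1)! dy, where γ(x, ρ) = (1/(ρ−1)!) ∫_0^x t^{ρ−1} e^{−t} dt and C(·,·) is the binomial coefficient. -/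
open Real MeasureTheory
open Set

lemma gk_integrableOn {a : ℝ} (ha : 0 ≤ a) (m : ℕ) :
    IntegrableOn (fun t : ℝ => t ^ m * Real.exp (-t)) (Set.Ioi a) := by
  have h := Real.GammaIntegral_convergent (s := (m + 1 : ℝ)) (by positivity)
  have h2 : IntegrableOn (fun t : ℝ => t ^ m * Real.exp (-t)) (Set.Ioi 0) := by
    refine h.congr_fun (fun x hx => ?_) measurableSet_Ioi
    rw [show ((m : ℝ) + 1) - 1 = (m : ℝ) by ring]; dsimp only; rw [Real.rpow_natCast, mul_comm]
  exact h2.mono_set (Set.Ioi_subset_Ioi ha)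

lemma gk_integral (m : ℕ) :
    ∫ t in Set.Ioi (0:ℝ), t ^ m * Real.exp (-t) = (Nat.factorial m : ℝ) := by
  have h := Real.Gamma_eq_integral (s := (m + 1 : ℝ)) (by positivity)
  rw [show ((m : ℝ) + 1) = ((m : ℕ) : ℝ) + 1 from rfl, Real.Gamma_nat_eq_factorial] at h
  rw [h]
  refine setIntegral_congr_fun measurableSet_Ioi (fun x hx => ?_)
  rw [show ((m : ℝ) + 1) - 1 = (m : ℝ) by ring, Real.rpow_natCast, mul_comm]

lemma term_eq (ρ : ℕ) (hρ : 1 ≤ ρ) {θ μ τ : ℝ} (hθ : 0 < θ) (hμ : 0 < μ) (hτ : 0 ≤ τ) :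
    IntegrableOn (fun y : ℝ => Real.exp (-2 * θ * max τ y) *
        (μ ^ ρ * y ^ (ρ - 1) * Real.exp (-μ * y) / (Nat.factorial (ρ - 1)))) (Set.Ioi 0)
    ∧ Real.exp (-2 * θ * τ) * normIncGamma (μ * τ) ρ
        + (μ / (2 * θ + μ)) ^ ρ * (1 - normIncGamma ((2 * θ + μ) * τ) ρ)
      = ∫ y in Set.Ioi (0:ℝ), Real.exp (-2 * θ * max τ y) *
          (μ ^ ρ * y ^ (ρ - 1) * Real.exp (-μ * y) / (Nat.factorial (ρ - 1))) := by
  obtain ⟨m, rfl⟩ : ∃ m, ρ = m + 1 := ⟨ρ - 1, by omega⟩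
  simp only [Nat.add_sub_cancel, normIncGamma]
  set c : ℝ := 2 * θ + μ with hc_def
  have hc : 0 < c := by positivity
  have hcτ : 0 ≤ c * τ := by positivity
  have hfm : (Nat.factorial m : ℝ) ≠ 0 := by positivity
  set f : ℝ → ℝ := fun y => Real.exp (-2 * θ * max τ y) *
      (μ ^ (m+1) * y ^ m * Real.exp (-μ * y) / (Nat.factorial m)) with hf_def
  set g : ℝ → ℝ := fun t => t ^ m * Real.exp (-t) with hg_def
  have hfc : Continuous f := by fun_prop
  have h1 : IntegrableOn f (Ioc 0 τ) := hfc.integrableOn_Ioc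
  -- pointwise form on Ioi τ
  have e2 : EqOn f (fun y => (μ ^ (m+1) / (Nat.factorial m * c ^ m)) * g (c * y)) (Ioi τ) := by
    intro y hy
    have hy' : τ ≤ y := le_of_lt hy
    simp only [hf_def, hg_def, max_eq_right hy']
    have hee : Real.exp (-2 * θ * y) * Real.exp (-μ * y) = Real.exp (-(c * y)) := by
      rw [← Real.exp_add]; congr 1; rw [hc_def]; ring
    have hcm : (c:ℝ) ^ m ≠ 0 := by positivity
    rw [mul_pow, ← hee]
    field_simp
  have h2 : IntegrableOn f (Ioi τ) := by
    have hgi : IntegrableOn (fun y => g (c * y)) (Ioi τ) :=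
      (integrableOn_Ioi_comp_mul_left_iff g τ hc).2 ((gk_integrableOn hcτ m))
    exact MeasureTheory.IntegrableOn.congr_fun (hgi.const_mul _)
      (fun y hy => (e2 hy).symm) measurableSet_Ioi
  constructor
  · rw [← Set.Ioc_union_Ioi_eq_Ioi hτ]
    exact h1.union h2
  -- split the integral
  have hsplit : ∫ y in Ioi (0:ℝ), f y = (∫ y in Ioc 0 τ, f y) + ∫ y in Ioi τ, f y := by
    rw [← Set.Ioc_union_Ioi_eq_Ioi hτ]
    exact setIntegral_union (Set.Ioc_disjoint_Ioi le_rfl) measurableSet_Ioi h1 h2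
  have hp1 : ∫ y in Ioc 0 τ, f y
      = Real.exp (-2*θ*τ) * (1/(Nat.factorial m : ℝ) * ∫ t in (0:ℝ)..(μ*τ), g t) := by
    have e1 : EqOn f
        (fun y => (Real.exp (-2*θ*τ) * (μ^(m+1)/(Nat.factorial m : ℝ)) * (μ⁻¹)^m) * g (μ * y))
        (Ioc 0 τ) := by
      intro y hy
      simp only [hf_def, hg_def, max_eq_left hy.2]
      rw [mul_pow, neg_mul μ y]
      field_simp
      rw [one_div, inv_pow, mul_assoc, inv_mul_cancel₀ (pow_ne_zero m hμ.ne'), mul_one]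
    rw [setIntegral_congr_fun measurableSet_Ioc e1, MeasureTheory.integral_const_mul,
      ← intervalIntegral.integral_of_le hτ, intervalIntegral.integral_comp_mul_left g hμ.ne',
      mul_zero, smul_eq_mul]
    field_simp
    rw [one_div, inv_pow, pow_succ, mul_comm (μ ^ m) μ, mul_assoc μ,
      mul_inv_cancel₀ (pow_ne_zero m hμ.ne'), mul_one]
  have hgioi : ∫ t in Ioi (c*τ), g t = (Nat.factorial m : ℝ) - ∫ t in (0:ℝ)..(c*τ), g t := by
    have hs2 : ∫ t in Ioi (0:ℝ), g t = (∫ t in Ioc 0 (c*τ), g t) + ∫ t in Ioi (c*τ), g t := by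
      rw [← Set.Ioc_union_Ioi_eq_Ioi hcτ]
      exact setIntegral_union (Set.Ioc_disjoint_Ioi le_rfl) measurableSet_Ioi
        ((gk_integrableOn le_rfl m).mono_set Set.Ioc_subset_Ioi_self) (gk_integrableOn hcτ m)
    have hgk : ∫ t in Ioi (0:ℝ), g t = (Nat.factorial m : ℝ) := gk_integral m
    rw [intervalIntegral.integral_of_le hcτ]
    linarith [hs2, hgk]
  have hp2 : ∫ y in Ioi τ, f y
      = (μ/c)^(m+1) * (1 - 1/(Nat.factorial m : ℝ) * ∫ t in (0:ℝ)..(c*τ), g t) := by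
    rw [setIntegral_congr_fun measurableSet_Ioi e2, MeasureTheory.integral_const_mul,
      MeasureTheory.integral_comp_mul_left_Ioi g τ hc, smul_eq_mul, hgioi, div_pow]
    have hcm : (c:ℝ) ≠ 0 := hc.ne'
    field_simp
    ring
  rw [hsplit, hp1, hp2]

lemma hexp (x : ℝ) : ∑' n : ℕ, x ^ n / (Nat.factorial n : ℝ) = Real.exp x := by
  rw [Real.exp_eq_exp_ℝ, NormedSpace.exp_eq_tsum_div]

lemma d_int {μ : ℝ} (hμ : 0 < μ) (m : ℕ) :
    IntegrableOn (fun y : ℝ => μ ^ (m+1) * y ^ m * Real.exp (-μ * y) / (Nat.factorial m))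
      (Set.Ioi 0)
    ∧ ∫ y in Set.Ioi (0:ℝ), μ ^ (m+1) * y ^ m * Real.exp (-μ * y) / (Nat.factorial m) = 1 := by
  set g : ℝ → ℝ := fun t => t ^ m * Real.exp (-t) with hg_def
  have hfm : (Nat.factorial m : ℝ) ≠ 0 := by positivity
  have hgi : IntegrableOn (fun y => g (μ * y)) (Ioi 0) := by
    refine (integrableOn_Ioi_comp_mul_left_iff g 0 hμ).2 ?_
    rw [mul_zero]; exact gk_integrableOn le_rfl m
  have e : EqOn (fun y : ℝ => (μ / (Nat.factorial m : ℝ)) * g (μ * y))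
      (fun y : ℝ => μ ^ (m+1) * y ^ m * Real.exp (-μ * y) / (Nat.factorial m)) (Ioi 0) := by
    intro y hy
    simp only [hg_def]
    rw [mul_pow, neg_mul μ y]
    field_simp
    ring
  constructor
  · exact MeasureTheory.IntegrableOn.congr_fun (hgi.const_mul _) e measurableSet_Ioi
  · rw [← setIntegral_congr_fun measurableSet_Ioi e, MeasureTheory.integral_const_mul,
      MeasureTheory.integral_comp_mul_left_Ioi g 0 hμ, mul_zero, smul_eq_mul, gk_integral]
    field_simp

lemma mixture (K : ℕ) (hK : 1 ≤ K) (ε μ y : ℝ) :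
    ∑' n : ℕ, (Nat.choose (n + K - 1) (K - 1) : ℝ) * ε ^ n * (1 - ε) ^ K *
        (μ ^ (n + K) * y ^ (n + K - 1) * Real.exp (-μ * y) / (Nat.factorial (n + K - 1)))
      = ((1 - ε) * μ) ^ K * y ^ (K - 1) * Real.exp (-(1 - ε) * μ * y)
          / (Nat.factorial (K - 1)) := by
  obtain ⟨j, rfl⟩ : ∃ j, K = j + 1 := ⟨K - 1, by omega⟩
  simp only [Nat.add_sub_cancel, show ∀ n : ℕ, n + (j + 1) - 1 = n + j from fun n => by omega]
  have hchoose : ∀ n : ℕ, ((n + j).choose j : ℝ)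
      = (Nat.factorial (n + j) : ℝ) / ((Nat.factorial j : ℝ) * (Nat.factorial n : ℝ)) := by
    intro n
    have h := Nat.choose_mul_factorial_mul_factorial (Nat.le_add_left j n)
    rw [Nat.add_sub_cancel] at h
    have h2 : ((n + j).choose j : ℝ) * (Nat.factorial j : ℝ) * (Nat.factorial n : ℝ)
        = (Nat.factorial (n + j) : ℝ) := by exact_mod_cast h
    field_simp
    linarith [h2]
  have hterm : ∀ n : ℕ, ((n + j).choose j : ℝ) * ε ^ n * (1 - ε) ^ (j+1) *
      (μ ^ (n + (j+1)) * y ^ (n + j) * Real.exp (-μ * y) / (Nat.factorial (n + j)))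
      = ((1 - ε) ^ (j+1) * μ ^ (j+1) * y ^ j * Real.exp (-μ * y) / (Nat.factorial j)) *
          ((ε * μ * y) ^ n / (Nat.factorial n)) := by
    intro n
    rw [hchoose n]
    have h1 : (Nat.factorial (n+j) : ℝ) ≠ 0 := by positivity
    have h2 : (Nat.factorial j : ℝ) ≠ 0 := by positivity
    have h3 : (Nat.factorial n : ℝ) ≠ 0 := by positivity
    field_simp
    ring
  rw [tsum_congr hterm, tsum_mul_left, hexp (ε * μ * y)]
  have hee : Real.exp (-μ * y) * Real.exp (ε * μ * y) = Real.exp (-(1 - ε) * μ * y) := by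
    rw [← Real.exp_add]; congr 1; ring
  rw [mul_pow, ← hee]
  ring

/-- The function `F_k(τ)` of the paper (eq. (31)) equals `E[e^{-2θ max(τ, Ỹ)}]` where `Ỹ` has
the Gamma(K, (1-ε)μ) density (sum reindexed by `ρ = n + K`). -/
theorem F_eq_expected_exp_max (K : ℕ) (hK : 1 ≤ K) (ε θ μ τ : ℝ)
    (hε0 : 0 ≤ ε) (hε1 : ε < 1) (hθ : 0 < θ) (hμ : 0 < μ) (hτ : 0 ≤ τ) :
    ∑' n : ℕ, (Nat.choose (n + K - 1) (K - 1) : ℝ) * ε ^ n * (1 - ε) ^ K *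
        (Real.exp (-2 * θ * τ) * normIncGamma (μ * τ) (n + K)
          + (μ / (2 * θ + μ)) ^ (n + K) * (1 - normIncGamma ((2 * θ + μ) * τ) (n + K)))
      = ∫ y in Set.Ioi (0 : ℝ),
          Real.exp (-2 * θ * max τ y) *
            (((1 - ε) * μ) ^ K * y ^ (K - 1) * Real.exp (-(1 - ε) * μ * y)
              / (Nat.factorial (K - 1))) := by
  have hε1' : 0 ≤ 1 - ε := by linarith
  -- weights
  have hw0 : ∀ n : ℕ, 0 ≤ (Nat.choose (n + K - 1) (K - 1) : ℝ) * ε ^ n * (1 - ε) ^ K :=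
    fun n => mul_nonneg (mul_nonneg (Nat.cast_nonneg _) (pow_nonneg hε0 _))
      (pow_nonneg hε1' _)
  have hwsum : Summable (fun n : ℕ =>
      (Nat.choose (n + K - 1) (K - 1) : ℝ) * ε ^ n * (1 - ε) ^ K) := by
    have hr : ‖ε‖ < 1 := by rw [Real.norm_eq_abs, abs_of_nonneg hε0]; exact hε1
    have h := (summable_choose_mul_geometric_of_norm_lt_one (K - 1) hr).mul_right ((1 - ε) ^ K)
    exact h.congr fun n => by rw [show n + (K - 1) = n + K - 1 by omega]
  -- the per-term integrand
  have hterm : ∀ n : ℕ,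
      (Nat.choose (n + K - 1) (K - 1) : ℝ) * ε ^ n * (1 - ε) ^ K *
        (Real.exp (-2 * θ * τ) * normIncGamma (μ * τ) (n + K)
          + (μ / (2 * θ + μ)) ^ (n + K) * (1 - normIncGamma ((2 * θ + μ) * τ) (n + K)))
      = ∫ y in Set.Ioi (0:ℝ),
          (Nat.choose (n + K - 1) (K - 1) : ℝ) * ε ^ n * (1 - ε) ^ K *
            (Real.exp (-2 * θ * max τ y) *
              (μ ^ (n + K) * y ^ (n + K - 1) * Real.exp (-μ * y)
                / (Nat.factorial (n + K - 1)))) := by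
    intro n
    rw [(term_eq (n + K) (by omega) hθ hμ hτ).2, ← MeasureTheory.integral_const_mul]
  have hGint : ∀ n : ℕ, IntegrableOn (fun y : ℝ =>
      (Nat.choose (n + K - 1) (K - 1) : ℝ) * ε ^ n * (1 - ε) ^ K *
        (Real.exp (-2 * θ * max τ y) *
          (μ ^ (n + K) * y ^ (n + K - 1) * Real.exp (-μ * y)
            / (Nat.factorial (n + K - 1))))) (Set.Ioi 0) :=
    fun n => (term_eq (n + K) (by omega) hθ hμ hτ).1.const_mul _
  have hG0 : ∀ n : ℕ, ∀ y ∈ Set.Ioi (0:ℝ), 0 ≤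
      (Nat.choose (n + K - 1) (K - 1) : ℝ) * ε ^ n * (1 - ε) ^ K *
        (Real.exp (-2 * θ * max τ y) *
          (μ ^ (n + K) * y ^ (n + K - 1) * Real.exp (-μ * y)
            / (Nat.factorial (n + K - 1)))) := by
    intro n y hy
    have hy' : (0:ℝ) ≤ y := le_of_lt hy
    refine mul_nonneg (hw0 n) (mul_nonneg (Real.exp_pos _).le ?_)
    positivity
  -- bound on the integral of each term
  have hGle : ∀ n : ℕ, (∫ y in Set.Ioi (0:ℝ),
      (Nat.choose (n + K - 1) (K - 1) : ℝ) * ε ^ n * (1 - ε) ^ K *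
        (Real.exp (-2 * θ * max τ y) *
          (μ ^ (n + K) * y ^ (n + K - 1) * Real.exp (-μ * y)
            / (Nat.factorial (n + K - 1)))))
      ≤ (Nat.choose (n + K - 1) (K - 1) : ℝ) * ε ^ n * (1 - ε) ^ K := by
    intro n
    have hd := d_int hμ (n + K - 1)
    rw [show n + K - 1 + 1 = n + K by omega] at hd
    calc (∫ y in Set.Ioi (0:ℝ),
        (Nat.choose (n + K - 1) (K - 1) : ℝ) * ε ^ n * (1 - ε) ^ K *
          (Real.exp (-2 * θ * max τ y) *
            (μ ^ (n + K) * y ^ (n + K - 1) * Real.exp (-μ * y)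
              / (Nat.factorial (n + K - 1)))))
        ≤ ∫ y in Set.Ioi (0:ℝ),
            (Nat.choose (n + K - 1) (K - 1) : ℝ) * ε ^ n * (1 - ε) ^ K *
              (μ ^ (n + K) * y ^ (n + K - 1) * Real.exp (-μ * y)
                / (Nat.factorial (n + K - 1))) := by
          refine setIntegral_mono_on (hGint n) (hd.1.const_mul _) measurableSet_Ioi
            (fun y hy => ?_)
          have hy' : (0:ℝ) ≤ y := le_of_lt hy
          refine mul_le_mul_of_nonneg_left ?_ (hw0 n)
          have hE : Real.exp (-2 * θ * max τ y) ≤ 1 := by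
            rw [Real.exp_le_one_iff]
            have : 0 ≤ max τ y := le_trans hτ (le_max_left _ _)
            nlinarith
          have hdnn : 0 ≤ μ ^ (n + K) * y ^ (n + K - 1) * Real.exp (-μ * y)
              / (Nat.factorial (n + K - 1) : ℝ) := by positivity
          calc Real.exp (-2 * θ * max τ y) *
              (μ ^ (n + K) * y ^ (n + K - 1) * Real.exp (-μ * y)
                / (Nat.factorial (n + K - 1)))
              ≤ 1 * (μ ^ (n + K) * y ^ (n + K - 1) * Real.exp (-μ * y)
                / (Nat.factorial (n + K - 1))) := mul_le_mul_of_nonneg_right hE hdnn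
            _ = _ := one_mul _
      _ = (Nat.choose (n + K - 1) (K - 1) : ℝ) * ε ^ n * (1 - ε) ^ K := by
          rw [MeasureTheory.integral_const_mul, hd.2, mul_one]
  -- measurability
  have hGmeas : ∀ n : ℕ, AEStronglyMeasurable (fun y : ℝ =>
      (Nat.choose (n + K - 1) (K - 1) : ℝ) * ε ^ n * (1 - ε) ^ K *
        (Real.exp (-2 * θ * max τ y) *
          (μ ^ (n + K) * y ^ (n + K - 1) * Real.exp (-μ * y)
            / (Nat.factorial (n + K - 1)))))
      (volume.restrict (Set.Ioi 0)) := fun n => (hGint n).1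
  -- the lintegral bound
  have key : (∑' n : ℕ, ∫⁻ y, ‖(Nat.choose (n + K - 1) (K - 1) : ℝ) * ε ^ n * (1 - ε) ^ K *
        (Real.exp (-2 * θ * max τ y) *
          (μ ^ (n + K) * y ^ (n + K - 1) * Real.exp (-μ * y)
            / (Nat.factorial (n + K - 1))))‖₊ ∂(volume.restrict (Set.Ioi 0))) ≠ ⊤ := by
    have h1 : ∀ n : ℕ, (∫⁻ y, ‖(Nat.choose (n + K - 1) (K - 1) : ℝ) * ε ^ n * (1 - ε) ^ K *
        (Real.exp (-2 * θ * max τ y) *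
          (μ ^ (n + K) * y ^ (n + K - 1) * Real.exp (-μ * y)
            / (Nat.factorial (n + K - 1))))‖₊ ∂(volume.restrict (Set.Ioi 0)))
        = ENNReal.ofReal (∫ y in Set.Ioi (0:ℝ),
            (Nat.choose (n + K - 1) (K - 1) : ℝ) * ε ^ n * (1 - ε) ^ K *
              (Real.exp (-2 * θ * max τ y) *
                (μ ^ (n + K) * y ^ (n + K - 1) * Real.exp (-μ * y)
                  / (Nat.factorial (n + K - 1))))) := by
      intro n
      have hae : 0 ≤ᵐ[volume.restrict (Set.Ioi (0:ℝ))] (fun y : ℝ =>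
          (Nat.choose (n + K - 1) (K - 1) : ℝ) * ε ^ n * (1 - ε) ^ K *
            (Real.exp (-2 * θ * max τ y) *
              (μ ^ (n + K) * y ^ (n + K - 1) * Real.exp (-μ * y)
                / (Nat.factorial (n + K - 1))))) :=
        (ae_restrict_iff' measurableSet_Ioi).2 (Filter.Eventually.of_forall (hG0 n))
      rw [MeasureTheory.ofReal_integral_eq_lintegral_ofReal (hGint n) hae]
      refine lintegral_congr_ae (hae.mono fun y hy => ?_)
      simp only [Pi.zero_apply] at hy
      exact Real.enorm_eq_ofReal hy
    rw [tsum_congr h1]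
    have h2 : (∑' n : ℕ, ENNReal.ofReal (∫ y in Set.Ioi (0:ℝ),
            (Nat.choose (n + K - 1) (K - 1) : ℝ) * ε ^ n * (1 - ε) ^ K *
              (Real.exp (-2 * θ * max τ y) *
                (μ ^ (n + K) * y ^ (n + K - 1) * Real.exp (-μ * y)
                  / (Nat.factorial (n + K - 1))))))
        ≤ ∑' n : ℕ, ENNReal.ofReal
            ((Nat.choose (n + K - 1) (K - 1) : ℝ) * ε ^ n * (1 - ε) ^ K) :=
      ENNReal.tsum_le_tsum (fun n => ENNReal.ofReal_le_ofReal (hGle n))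
    rw [← ENNReal.ofReal_tsum_of_nonneg hw0 hwsum] at h2
    exact ne_top_of_le_ne_top ENNReal.ofReal_ne_top h2
  rw [tsum_congr hterm, ← MeasureTheory.integral_tsum hGmeas key]
  refine setIntegral_congr_fun measurableSet_Ioi (fun y hy => ?_)
  have hswap : ∀ n : ℕ,
      (Nat.choose (n + K - 1) (K - 1) : ℝ) * ε ^ n * (1 - ε) ^ K *
        (Real.exp (-2 * θ * max τ y) *
          (μ ^ (n + K) * y ^ (n + K - 1) * Real.exp (-μ * y)
            / (Nat.factorial (n + K - 1))))
      = Real.exp (-2 * θ * max τ y) *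
          ((Nat.choose (n + K - 1) (K - 1) : ℝ) * ε ^ n * (1 - ε) ^ K *
            (μ ^ (n + K) * y ^ (n + K - 1) * Real.exp (-μ * y)
              / (Nat.factorial (n + K - 1)))) := fun n => by ring
  rw [tsum_congr hswap, tsum_mul_left, mixture K hK ε μ y]
end
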